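/- Let H be a Hopf algebra over a field F, let L be an H-comodule Lie algebra, and let M be an H-subcomodule of L. Then the centralizer N = {a ∈ L : [a,b] = 0 for all b ∈ M} of M in L is an H-subcomodule of L. -/

import Mathlib

open TensorProduct

noncomputable section

section

attribute [local instance 100] LieRing.ofAssociativeRing

/-- The bracket of a Lie algebra as a linear map on the tensor square. -/
def bracketHom (F L : Type*) [Field F] [LieRing L] [LieAlgebra F L] : L ⊗[F] L →ₗ[F] L :=
  TensorProduct.lift (LieAlgebra.ad F L).toLinearMap

end

/-- A right `H`-comodule structure on an `F`-vector space `V`. -/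
structure HComodule (F H V : Type*) [Field F] [Ring H] [HopfAlgebra F H]
    [AddCommGroup V] [Module F V] where
  ρ : V →ₗ[F] V ⊗[F] H
  coassoc : ∀ x : V, (TensorProduct.assoc F V H H) ((ρ.rTensor H) (ρ x))
      = ((Coalgebra.comul (R := F) (A := H)).lTensor V) (ρ x)
  counit : ∀ x : V,
    (TensorProduct.rid F V) (((Coalgebra.counit (R := F) (A := H)).lTensor V) (ρ x)) = x

/-- An `H`-comodule Lie algebra: a Lie algebra and right `H`-comodule `L` such that
`ρ⁅a,b⁆ = ⁅a₍₀₎,b₍₀₎⁆ ⊗ a₍₁₎b₍₁₎` (Sweedler notation). -/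
structure HComoduleLieAlgebra (F H L : Type*) [Field F] [Ring H] [HopfAlgebra F H]
    [LieRing L] [LieAlgebra F L] extends HComodule F H L where
  compat : ∀ a b : L, ρ ⁅a, b⁆ =
    (TensorProduct.map (bracketHom F L) (LinearMap.mul' F H))
      ((TensorProduct.tensorTensorTensorComm F L H L H) (ρ a ⊗ₜ[F] ρ b))

/-- A subspace `W` is an `H`-subcomodule if `ρ(W) ⊆ W ⊗ H`. -/
def HComodule.IsHSubcomodule {F H V : Type*} [Field F] [Ring H] [HopfAlgebra F H]
    [AddCommGroup V] [Module F V] (C : HComodule F H V) (W : Submodule F V) : Prop :=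
  ∀ x ∈ W, C.ρ x ∈ LinearMap.range (W.subtype.rTensor H)

/-- `t ∈ H*` is a left integral on `H`: `t(a₍₂₎)a₍₁₎ = t(a)1`. -/
def IsLeftIntegral (F H : Type*) [Field F] [Ring H] [HopfAlgebra F H]
    (t : H →ₗ[F] F) : Prop :=
  ∀ a : H, (TensorProduct.rid F H) ((t.lTensor H) (Coalgebra.comul (R := F) a)) = t a • (1 : H)

/-- `t ∈ H*` is ad-invariant: `t(a₍₁₎ b S(a₍₂₎)) = ε(a) t(b)`. -/
def IsAdInvariant (F H : Type*) [Field F] [Ring H] [HopfAlgebra F H]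
    (t : H →ₗ[F] F) : Prop :=
  ∀ a b : H,
    t ((LinearMap.mul' F H)
        ((TensorProduct.map (LinearMap.mulRight F b) (HopfAlgebra.antipode (R := F)))
          (Coalgebra.comul (R := F) a)))
      = Coalgebra.counit (R := F) a * t b


section VectAux
variable {F V H : Type*} [Field F] [AddCommGroup V] [Module F V]
  [AddCommGroup H] [Module F H]

/-- If all contractions of `s` by functionals on `H` vanish, then `s = 0`. -/
lemma contract_eq_zero (s : V ⊗[F] H)
    (h : ∀ f : H →ₗ[F] F, TensorProduct.rid F V ((f.lTensor V) s) = 0) : s = 0 := by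
  classical
  set b := Module.Basis.ofVectorSpace F H with hb
  set e : V ⊗[F] H ≃ₗ[F] (_ →₀ V) :=
    (TensorProduct.congr (LinearEquiv.refl F V) b.repr).trans
      (TensorProduct.finsuppScalarRight F F V _) with he
  have key : ∀ (t : V ⊗[F] H) i, e t i
      = TensorProduct.rid F V ((((Finsupp.lapply i) ∘ₗ (b.repr.toLinearMap : H →ₗ[F] _)).lTensor V) t) := by
    intro t i
    induction t using TensorProduct.induction_on with
    | zero => simp
    | tmul v x =>
      simp [he, TensorProduct.finsuppScalarRight_apply_tmul_apply]
    | add t1 t2 h1 h2 => simp [map_add, h1, h2]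
  have hz : e s = 0 := by
    ext i
    rw [key]
    simpa using h ((Finsupp.lapply i) ∘ₗ (b.repr.toLinearMap : H →ₗ[F] _))
  simpa using e.map_eq_zero_iff.mp (by simpa using hz)

lemma contract_naturality {V' : Type*} [AddCommGroup V'] [Module F V'] (g : V →ₗ[F] V')
    (f : H →ₗ[F] F) (t : V ⊗[F] H) :
    TensorProduct.rid F V' ((f.lTensor V') ((g.rTensor H) t))
      = g (TensorProduct.rid F V ((f.lTensor V) t)) := by
  induction t using TensorProduct.induction_on with
  | zero => simp
  | tmul v x => simp
  | add a c h1 h2 => simp [map_add, h1, h2]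

/-- Membership criterion for the image of `W ⊗ H` in `V ⊗ H`. -/
lemma mem_range_rTensor_of_contractions (W : Submodule F V) (t : V ⊗[F] H)
    (h : ∀ f : H →ₗ[F] F, TensorProduct.rid F V ((f.lTensor V) t) ∈ W) :
    t ∈ LinearMap.range (W.subtype.rTensor H) := by
  have hex : Function.Exact (W.subtype.rTensor H) (W.mkQ.rTensor H) :=
    Module.Flat.rTensor_exact H (LinearMap.exact_subtype_mkQ W)
  have h0 : (W.mkQ.rTensor H) t = 0 := by
    apply contract_eq_zero
    intro f
    rw [contract_naturality]
    simpa [Submodule.Quotient.mk_eq_zero] using h f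
  simpa using (hex _).mp h0

end VectAux


section PsiAux
variable (F H L : Type*) [Field F] [Ring H] [HopfAlgebra F H]
  [LieRing L] [LieAlgebra F L]

/-- `ψ q (c ⊗ h) = Σ ⁅q₍L₎, c⁆ ⊗ q₍H₎h`. -/
def psi (q : L ⊗[F] H) : L ⊗[F] H →ₗ[F] L ⊗[F] H :=
  (TensorProduct.map (bracketHom F L) (LinearMap.mul' F H)) ∘ₗ
    (TensorProduct.tensorTensorTensorComm F L H L H).toLinearMap ∘ₗ
      (TensorProduct.mk F (L ⊗[F] H) (L ⊗[F] H)) q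

variable {F H L}

@[simp] lemma psi_tmul (a : L) (s : H) (w : L ⊗[F] H) :
    psi F H L (a ⊗ₜ[F] s) w
      = (TensorProduct.map (bracketHom F L) (LinearMap.mul' F H))
          ((TensorProduct.tensorTensorTensorComm F L H L H) ((a ⊗ₜ[F] s) ⊗ₜ[F] w)) := rfl

@[simp] lemma psi_tmul_tmul (a : L) (s : H) (c : L) (h : H) :
    psi F H L (a ⊗ₜ[F] s) (c ⊗ₜ[F] h) = ⁅a, c⁆ ⊗ₜ[F] (s * h) := by
  simp [psi, bracketHom, TensorProduct.tensorTensorTensorComm_tmul]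

lemma psi_zero_q (w : L ⊗[F] H) : psi F H L 0 w = 0 := by
  simp [psi, zero_tmul]

lemma psi_add_q (q₁ q₂ : L ⊗[F] H) (w : L ⊗[F] H) :
    psi F H L (q₁ + q₂) w = psi F H L q₁ w + psi F H L q₂ w := by
  simp [psi, add_tmul]

lemma lTensor_mulRight_add (a b : H) (w : L ⊗[F] H) :
    ((LinearMap.mulRight F (a + b)).lTensor L) w
      = ((LinearMap.mulRight F a).lTensor L) w + ((LinearMap.mulRight F b).lTensor L) w := by
  induction w using TensorProduct.induction_on with
  | zero => simp
  | tmul l s => simp [mul_add, tmul_add]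
  | add x y h1 h2 => simp only [map_add, h1, h2]; abel

lemma lTensor_mulRight_algebraMap (r : F) (w : L ⊗[F] H) :
    ((LinearMap.mulRight F (algebraMap F H r)).lTensor L) w = r • w := by
  induction w using TensorProduct.induction_on with
  | zero => simp
  | tmul l s =>
    simp [Algebra.algebraMap_eq_smul_one, mul_smul_comm, tmul_smul]
  | add x y h1 h2 => simp [map_add, h1, h2, smul_add]

/-- G1 -/
lemma psi_tmul_right (q : L ⊗[F] H) (c : L) (h : H) :
    psi F H L q (c ⊗ₜ[F] h)
      = ((LinearMap.mulRight F h).lTensor L) (psi F H L q (c ⊗ₜ[F] 1)) := by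
  induction q using TensorProduct.induction_on with
  | zero => simp [psi_zero_q]
  | tmul a s => simp [psi_tmul_tmul]
  | add q1 q2 h1 h2 => simp [psi_add_q, map_add, h1, h2]

variable (F H L) in
/-- `Φ ((l ⊗ h) ⊗ k) = l ⊗ h·S(k)` -/
def phiMap : (L ⊗[F] H) ⊗[F] H →ₗ[F] L ⊗[F] H :=
  ((LinearMap.mul' F H).lTensor L) ∘ₗ (TensorProduct.assoc F L H H).toLinearMap ∘ₗ
    ((HopfAlgebra.antipode (R := F)).lTensor (L ⊗[F] H))

@[simp] lemma phiMap_tmul (l : L) (h k : H) :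
    phiMap F H L ((l ⊗ₜ[F] h) ⊗ₜ[F] k) = l ⊗ₜ[F] (h * HopfAlgebra.antipode (R := F) k) := by
  simp [phiMap]

/-- G2a -/
lemma phiMap_lTensor_mulRight (w : L ⊗[F] H) (h₁ h₂ : H) :
    phiMap F H L ((((LinearMap.mulRight F h₁).lTensor L) w) ⊗ₜ[F] h₂)
      = ((LinearMap.mulRight F (h₁ * HopfAlgebra.antipode (R := F) h₂)).lTensor L) w := by
  induction w using TensorProduct.induction_on with
  | zero => simp
  | tmul l s => simp [mul_assoc]
  | add x y hx hy =>
    simp only [map_add, add_tmul] at *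
    simp [hx, hy]

/-- G2 -/
lemma phiMap_psi_assoc (q : L ⊗[F] H) (c : L) (u : H ⊗[F] H) :
    phiMap F H L (((psi F H L q).rTensor H)
        ((TensorProduct.assoc F L H H).symm (c ⊗ₜ[F] u)))
      = ((LinearMap.mulRight F
            ((LinearMap.mul' F H) (((HopfAlgebra.antipode (R := F)).lTensor H) u))).lTensor L)
          (psi F H L q (c ⊗ₜ[F] 1)) := by
  induction u using TensorProduct.induction_on with
  | zero =>
    simp [show (LinearMap.mulRight F (0:H)) = 0 from by ext; simp]
  | tmul h₁ h₂ =>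
    rw [show (TensorProduct.assoc F L H H).symm (c ⊗ₜ[F] (h₁ ⊗ₜ[F] h₂))
        = (c ⊗ₜ[F] h₁) ⊗ₜ[F] h₂ from rfl]
    rw [LinearMap.rTensor_tmul, psi_tmul_right, phiMap_lTensor_mulRight]
    simp
  | add u1 u2 h1 h2 =>
    simp only [tmul_add, map_add] at *
    rw [h1, h2, ← lTensor_mulRight_add]

end PsiAux

section PsiAux2
variable {F H L : Type*} [Field F] [Ring H] [HopfAlgebra F H]
  [LieRing L] [LieAlgebra F L]

@[simp] lemma bracketHom_tmul (a b : L) : bracketHom F L (a ⊗ₜ[F] b) = ⁅a, b⁆ := rfl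

/-- G3 -/
lemma bracket_contract (q : L ⊗[F] H) (f : H →ₗ[F] F) (b : L) :
    ⁅TensorProduct.rid F L ((f.lTensor L) q), b⁆
      = TensorProduct.rid F L ((f.lTensor L) (psi F H L q (b ⊗ₜ[F] 1))) := by
  induction q using TensorProduct.induction_on with
  | zero => simp [psi_zero_q]
  | tmul a s => simp [psi_tmul_tmul, smul_lie]
  | add q1 q2 h1 h2 => simp [psi_add_q, map_add, add_lie, h1, h2]

/-- Claim B, pure-tensor form. -/
lemma phiMap_psi_comul (q : L ⊗[F] H) (c : L) (h : H) :
    phiMap F H L (((psi F H L q).rTensor H)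
        ((TensorProduct.assoc F L H H).symm (c ⊗ₜ[F] (Coalgebra.comul (R := F) h))))
      = Coalgebra.counit (R := F) h • psi F H L q (c ⊗ₜ[F] 1) := by
  rw [phiMap_psi_assoc, HopfAlgebra.mul_antipode_lTensor_comul_apply,
    lTensor_mulRight_algebraMap]

/-- Claim B, general form. -/
lemma phiMap_psi_comul_lTensor (q : L ⊗[F] H) (w : L ⊗[F] H) :
    phiMap F H L (((psi F H L q).rTensor H)
        ((TensorProduct.assoc F L H H).symm
          (((Coalgebra.comul (R := F) (A := H)).lTensor L) w)))
      = psi F H L q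
          ((((Algebra.linearMap F H) ∘ₗ (Coalgebra.counit (R := F) (A := H))).lTensor L) w) := by
  induction w using TensorProduct.induction_on with
  | zero => simp
  | tmul c h =>
    rw [LinearMap.lTensor_tmul, phiMap_psi_comul, LinearMap.lTensor_tmul]
    simp [Algebra.algebraMap_eq_smul_one, tmul_smul]
  | add w1 w2 h1 h2 => simp only [map_add, h1, h2]

end PsiAux2


/-- if `L` is an `H`-comodule Lie algebra and `M` is an `H`-subcomodule of `L`,
then the centralizer `N = {a ∈ L : ⁅a,b⁆ = 0 for all b ∈ M}` of `M` in `L` is an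
`H`-subcomodule. -/
theorem centralizer_is_H_subcomodule
    (F H L : Type*) [Field F] [Ring H] [HopfAlgebra F H]
    [LieRing L] [LieAlgebra F L]
    (C : HComoduleLieAlgebra F H L)
    (M : Submodule F L) (hM : C.toHComodule.IsHSubcomodule M)
    (N : Submodule F L) (hN : (N : Set L) = {a : L | ∀ b ∈ M, ⁅a, b⁆ = 0}) :
    C.toHComodule.IsHSubcomodule N := by
  
  intro x hx
  have hxN : ∀ b ∈ M, ⁅x, b⁆ = 0 := by
    have hx' : x ∈ (N : Set L) := hx
    rw [hN] at hx'
    exact hx'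
  set q : L ⊗[F] H := C.ρ x with hq
  -- Key fact K: ψ_q kills ρ(c) for c ∈ M.
  have K : ∀ c ∈ M, psi F H L q (C.ρ c) = 0 := by
    intro c hc
    have : psi F H L q (C.ρ c) = C.ρ ⁅x, c⁆ := (C.compat x c).symm
    rw [this, hxN c hc, map_zero]
  -- Claim A: Φ ∘ (ψ_q ⊗ id) ∘ (ρ ⊗ id) kills ρ(b) for b ∈ M.
  have claimA : ∀ b ∈ M,
      phiMap F H L (((psi F H L q).rTensor H) ((C.ρ.rTensor H) (C.ρ b))) = 0 := by
    intro b hb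
    obtain ⟨u, hu⟩ := hM b hb
    rw [← hu]
    clear hu
    induction u using TensorProduct.induction_on with
    | zero => simp
    | tmul c h =>
      rw [LinearMap.rTensor_tmul, LinearMap.rTensor_tmul, LinearMap.rTensor_tmul,
        Submodule.subtype_apply, K c c.2]
      simp
    | add u1 u2 h1 h2 => simp only [map_add, h1, h2, add_zero]
  -- Main claim: ψ_q (b ⊗ 1) = 0 for b ∈ M.
  have main : ∀ b ∈ M, psi F H L q (b ⊗ₜ[F] (1 : H)) = 0 := by
    intro b hb
    have hco : (TensorProduct.assoc F L H H).symm
        (((Coalgebra.comul (R := F) (A := H)).lTensor L) (C.ρ b))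
          = (C.ρ.rTensor H) (C.ρ b) := by
      rw [← C.coassoc b, LinearEquiv.symm_apply_apply]
    have hcu : (((Algebra.linearMap F H) ∘ₗ
          (Coalgebra.counit (R := F) (A := H))).lTensor L) (C.ρ b) = b ⊗ₜ[F] (1 : H) := by
      have h1 : ((Coalgebra.counit (R := F) (A := H)).lTensor L) (C.ρ b)
          = b ⊗ₜ[F] (1 : F) := by
        have := C.counit b
        have h2 : ((Coalgebra.counit (R := F) (A := H)).lTensor L) (C.ρ b)
            = (TensorProduct.rid F L).symm b := by
          rw [LinearEquiv.eq_symm_apply]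
          exact this
        rw [h2, TensorProduct.rid_symm_apply]
      rw [LinearMap.lTensor_comp, LinearMap.comp_apply, h1, LinearMap.lTensor_tmul]
      simp
    have := phiMap_psi_comul_lTensor q (C.ρ b)
    rw [hco, hcu, claimA b hb] at this
    exact this.symm
  -- conclusion via contractions
  apply mem_range_rTensor_of_contractions
  intro f
  show TensorProduct.rid F L ((f.lTensor L) q) ∈ N
  rw [← SetLike.mem_coe, hN]
  intro b hb
  rw [bracket_contract, main b hb]
  simp
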